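/- Assume c* > c_min. Then exp(υ̂ − β·ω*) < δ/(β+δ); consequently ω^c := log(1 − exp(υ̂ − β·ω*)) is well-defined and satisfies ω^c > ω*. -/

import Mathlib

open Real

lemma key_mono (β a c : ℝ) (hβ : 0 < β) (ha : 0 < a) (hac : a < c) (hc1 : c < 1)
    (hkey : β * c < 1 - c) :
    log a + β * log (1 - a) < log c + β * log (1 - c) := by
  have hc0 : 0 < c := ha.trans hac
  have h1c : 0 < 1 - c := by linarith
  have h1a : 0 < 1 - a := by linarith
  have hA : (c - a) / c ≤ log c - log a := by
    have h := Real.log_le_sub_one_of_pos (div_pos ha hc0)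
    rw [Real.log_div ha.ne' hc0.ne'] at h
    have heq : a / c = 1 - (c - a) / c := by field_simp; ring
    rw [heq] at h
    linarith
  have hB : log (1 - a) - log (1 - c) ≤ (c - a) / (1 - c) := by
    have h := Real.log_le_sub_one_of_pos (div_pos h1a h1c)
    rw [Real.log_div h1a.ne' h1c.ne'] at h
    have heq : (1 - a) / (1 - c) = 1 + (c - a) / (1 - c) := by field_simp; ring
    rw [heq] at h
    linarith
  have hC : β * ((c - a) / (1 - c)) < (c - a) / c := by
    rw [mul_div_assoc', div_lt_div_iff₀ h1c hc0]
    nlinarith [mul_lt_mul_of_pos_left hkey (show (0:ℝ) < c - a by linarith)]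
  have hB' : β * (log (1 - a) - log (1 - c)) ≤ β * ((c - a) / (1 - c)) :=
    mul_le_mul_of_nonneg_left hB hβ.le
  nlinarith [hA, hB', hC]

/-- Deterministic economy with `υ̂ = log s + β log (1-s)` and `ω* = log (β/(β+δ))`.
If the first best is sustainable, `c* = δ/(β+δ) > c_min`, then
`exp (υ̂ - β ω*) < δ/(β+δ)`, so `ω^c = log (1 - exp (υ̂ - β ω*))` is well-defined
and satisfies `ω^c > ω*`. -/
theorem stmt_5 (β δ s cmin : ℝ)
    (hβ : β ∈ Set.Ioc (0 : ℝ) 1) (hδ : δ ∈ Set.Ioo (0 : ℝ) 1)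
    (hs1 : 1 / (1 + β) < s) (hs2 : s < 1)
    (hcmin : cmin ∈ Set.Ioo (0 : ℝ) s)
    (hcmineq : log cmin + β * log (1 - cmin) = log s + β * log (1 - s))
    (hfb : cmin < δ / (β + δ)) :
    exp ((log s + β * log (1 - s)) - β * log (β / (β + δ))) < δ / (β + δ) ∧
    log (β / (β + δ)) <
      log (1 - exp ((log s + β * log (1 - s)) - β * log (β / (β + δ)))) := by
  obtain ⟨hβ0, hβ1⟩ := hβ
  obtain ⟨hδ0, hδ1⟩ := hδ
  obtain ⟨hcm0, hcms⟩ := hcmin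
  have hbd : 0 < β + δ := by linarith
  have hc0 : 0 < δ / (β + δ) := div_pos hδ0 hbd
  have hc1 : δ / (β + δ) < 1 := by rw [div_lt_one hbd]; linarith
  have hkey : β * (δ / (β + δ)) < 1 - δ / (β + δ) := by
    rw [lt_sub_iff_add_lt, ← mul_div_assoc, ← add_div, div_lt_one hbd]
    nlinarith
  have h1c : (1 : ℝ) - δ / (β + δ) = β / (β + δ) := by
    field_simp
    ring
  have hK := key_mono β cmin (δ / (β + δ)) hβ0 hcm0 hfb hc1 hkey
  rw [h1c] at hK
  have hg1 : exp ((log s + β * log (1 - s)) - β * log (β / (β + δ))) < δ / (β + δ) := by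
    rw [← hcmineq]
    calc exp (log cmin + β * log (1 - cmin) - β * log (β / (β + δ)))
        < exp (log (δ / (β + δ))) := Real.exp_lt_exp.mpr (by linarith)
      _ = δ / (β + δ) := Real.exp_log hc0
  refine ⟨hg1, Real.log_lt_log (div_pos hβ0 hbd) ?_⟩
  linarith
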